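/- The curve C_{2A_5} = V(x_1 x_4 - x_2 x_3, x_1 x_3^2 + x_2^2 x_4) ⊂ P^3 lies on a smooth quadric and its singular locus consists of exactly the two points (1:0:0:0) and (0:0:0:1). -/
import Mathlib


open MvPolynomial

/-- The curve `C_{2A₅} = V(x₁x₄ - x₂x₃, x₁x₃² + x₂²x₄) ⊂ ℙ³` lies on a smooth quadric
(`x₁x₄ - x₂x₃` has nowhere-vanishing gradient away from the origin), and its singular
locus (points of `C` where the Jacobian of the two equations has rank ≤ 1) consists of
exactly the two points `(1:0:0:0)` and `(0:0:0:1)`. -/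
theorem C2A5_smooth_quadric_and_sing_locus
    (q g : MvPolynomial (Fin 4) ℂ)
    (hq : q = X 0 * X 3 - X 1 * X 2)
    (hg : g = X 0 * X 2 ^ 2 + X 1 ^ 2 * X 3) :
    (∀ y : Fin 4 → ℂ, y ≠ 0 → ∃ i, eval y (pderiv i q) ≠ 0) ∧
    (∀ y : Fin 4 → ℂ, y ≠ 0 →
      ((eval y q = 0 ∧ eval y g = 0 ∧
          ∀ i j, eval y (pderiv i q) * eval y (pderiv j g)
               = eval y (pderiv j q) * eval y (pderiv i g)) ↔
        ∃ c : ℂ, c ≠ 0 ∧ (y = c • ![1, 0, 0, 0] ∨ y = c • ![0, 0, 0, 1]))) := by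
  have eQ : ∀ (y : Fin 4 → ℂ) (i : Fin 4),
      eval y (pderiv i q) = ![y 3, -y 2, -y 1, y 0] i := by
    intro y i
    fin_cases i <;> simp [hq, pderiv_mul, pderiv_X]
  have eG : ∀ (y : Fin 4 → ℂ) (i : Fin 4),
      eval y (pderiv i g) = ![y 2 ^ 2, 2 * y 1 * y 3, 2 * y 0 * y 2, y 1 ^ 2] i := by
    intro y i
    fin_cases i <;> (simp [hg, pderiv_mul, pderiv_pow, pderiv_X]; try ring)
  have eq0 : ∀ y : Fin 4 → ℂ, eval y q = y 0 * y 3 - y 1 * y 2 := by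
    intro y; simp [hq]
  have eg0 : ∀ y : Fin 4 → ℂ, eval y g = y 0 * y 2 ^ 2 + y 1 ^ 2 * y 3 := by
    intro y; simp [hg]
  constructor
  · intro y hy
    have hy' : ∃ i : Fin 4, y i ≠ 0 := by
      by_contra h
      push_neg at h
      exact hy (funext fun i => h i)
    obtain ⟨i, hi⟩ := hy'
    fin_cases i
    · exact ⟨3, by rw [eQ]; simpa using hi⟩
    · exact ⟨2, by rw [eQ]; simpa using hi⟩
    · exact ⟨1, by rw [eQ]; simpa using hi⟩
    · exact ⟨0, by rw [eQ]; simpa using hi⟩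
  · intro y hy
    constructor
    · rintro ⟨h1, h2, h3⟩
      rw [eq0] at h1
      rw [eg0] at h2
      have m13 : -y 2 * y 1 ^ 2 = y 0 * (2 * y 1 * y 3) := by
        have := h3 1 3; rw [eQ, eQ, eG, eG] at this; simpa using this
      have m23 : -y 1 * y 1 ^ 2 = y 0 * (2 * y 0 * y 2) := by
        have := h3 2 3; rw [eQ, eQ, eG, eG] at this; simpa using this
      have m02 : y 3 * (2 * y 0 * y 2) = -y 1 * y 2 ^ 2 := by
        have := h3 0 2; rw [eQ, eQ, eG, eG] at this; simpa using this
      have m01 : y 3 * (2 * y 1 * y 3) = -y 2 * y 2 ^ 2 := by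
        have := h3 0 1; rw [eQ, eQ, eG, eG] at this; simpa using this
      have hb : y 1 = 0 := by
        by_contra hb
        have hc2 : y 2 = 0 := by
          have h' : y 1 ^ 2 * (3 * y 2) = 0 := by linear_combination (-1) * m13 - 2 * y 1 * h1
          rcases mul_eq_zero.mp h' with h' | h'
          · exact absurd (pow_eq_zero_iff (by norm_num)|>.mp h') hb
          · rcases mul_eq_zero.mp h' with h' | h'
            · exact absurd h' (by norm_num)
            · exact h'
        have hd2 : y 3 = 0 := by
          have h' : y 1 ^ 2 * y 3 = 0 := by linear_combination h2 - y 0 * y 2 * hc2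
          rcases mul_eq_zero.mp h' with h' | h'
          · exact absurd (pow_eq_zero_iff (by norm_num)|>.mp h') hb
          · exact h'
        have h' : y 1 ^ 3 = 0 := by linear_combination (-1) * m23 - 2 * y 0 ^ 2 * hc2
        exact hb (pow_eq_zero_iff (by norm_num)|>.mp h')
      have hc : y 2 = 0 := by
        by_contra hc
        have hb1 : y 1 = 0 := hb
        have h' : y 2 ^ 3 = 0 := by
          linear_combination m01 - 2 * y 3 ^ 2 * hb
        exact hc (pow_eq_zero_iff (by norm_num)|>.mp h')
      have h04 : y 0 * y 3 = 0 := by linear_combination h1 + y 2 * hb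
      rcases mul_eq_zero.mp h04 with h0 | h3'
      · refine ⟨y 3, ?_, Or.inr ?_⟩
        · intro hd
          apply hy
          funext i
          fin_cases i <;> simp [h0, hb, hc, hd]
        · funext i
          fin_cases i <;> simp [h0, hb, hc]
      · refine ⟨y 0, ?_, Or.inl ?_⟩
        · intro h0
          apply hy
          funext i
          fin_cases i <;> simp [h0, hb, hc, h3']
        · funext i
          fin_cases i <;> simp [h3', hb, hc]
    · rintro ⟨c, hc0, h | h⟩ <;> subst h <;>
        refine ⟨by simp [eq0, eg0], by simp [eq0, eg0], ?_⟩ <;>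
        · intro i j
          fin_cases i <;> fin_cases j <;> (simp [eQ, eG]; try ring)
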